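/- Let Φ be a crystallographic root system, let R ⊆ Φ be non-empty, and let Φ' be a root subsystem of Φ containing R. If L(Φ') = L(R) and L((Φ')^∨) = L(R^∨), then W_{Φ'} = W_R. -/

import Mathlib

open RealInnerProductSpace Submodule

variable {V : Type*} [NormedAddCommGroup V] [InnerProductSpace ℝ V] [FiniteDimensional ℝ V]

/-- The orthogonal reflection in the hyperplane `α^⊥`. -/
noncomputable def sRefl (α : V) : V ≃ₗᵢ[ℝ] V := reflection (ℝ ∙ α)ᗮ

/-- `Φ` is a root system in `V`. -/
def IsRootSystem (Φ : Set V) : Prop :=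
  Φ.Finite ∧ (0 : V) ∉ Φ ∧ span ℝ Φ = ⊤ ∧
    (∀ α ∈ Φ, ∀ β ∈ Φ, sRefl α β ∈ Φ) ∧
    (∀ α ∈ Φ, ∀ r : ℝ, r • α ∈ Φ → r = 1 ∨ r = -1)

/-- `Φ` is crystallographic. -/
def IsCrystallographic (Φ : Set V) : Prop :=
  ∀ α ∈ Φ, ∀ β ∈ Φ, ∃ k : ℤ, 2 * ⟪α, β⟫ / ⟪α, α⟫ = (k : ℝ)

/-- `Φ'` is a root subsystem of `Φ`. -/
def IsRootSubsystem (Φ Φ' : Set V) : Prop :=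
  Φ' ⊆ Φ ∧ ∀ α ∈ Φ', ∀ β ∈ Φ', sRefl α β ∈ Φ'

/-- The coroot `α^∨ = 2α/(α|α)`. -/
noncomputable def coroot (α : V) : V := (2 / ⟪α, α⟫) • α

/-- The subgroup `W_R` of the orthogonal group of `V` generated by the reflections
`s_α`, `α ∈ R`. -/
noncomputable def weylGroup (R : Set V) : Subgroup (V ≃ₗᵢ[ℝ] V) :=
  Subgroup.closure (sRefl '' R)

/-! ### Auxiliary material for the proof -/

section Stmt2Aux

set_option linter.unusedSectionVars false
set_option linter.unnecessarySimpa false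
set_option maxHeartbeats 1000000



lemma sRefl_apply (α v : V) : sRefl α v = v - (2 * ⟪α, v⟫ / ⟪α, α⟫) • α := by
  have h := (ℝ ∙ α).starProjection_add_starProjection_orthogonal v
  have hp : (ℝ ∙ α).starProjection v = (⟪α, v⟫ / (‖α‖^2 : ℝ)) • α :=
    starProjection_singleton ℝ v
  have h2 : (ℝ ∙ α)ᗮ.starProjection v = v - (⟪α, v⟫ / (‖α‖^2 : ℝ)) • α := by
    rw [← hp]
    have := congrArg (fun x : V => x - (ℝ ∙ α).starProjection v) h
    simpa using this.symm
  show reflection (ℝ ∙ α)ᗮ v = _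
  rw [reflection_apply, h2]
  have hn : (‖α‖^2 : ℝ) = ⟪α, α⟫ := real_inner_self_eq_norm_sq α |>.symm
  rw [hn, two_smul]
  module

lemma sRefl_involutive (α : V) (v : V) : sRefl α (sRefl α v) = v :=
  reflection_involutive _ v

lemma sRefl_mul_self (α : V) : sRefl α * sRefl α = 1 := by
  ext v; exact sRefl_involutive α v

lemma sRefl_inv (α : V) : (sRefl α)⁻¹ = sRefl α :=
  inv_eq_of_mul_eq_one_right (sRefl_mul_self α)

lemma sRefl_self (α : V) : sRefl α α = -α :=
  reflection_orthogonalComplement_singleton_eq_neg α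

lemma sRefl_neg (α : V) : sRefl (-α) = sRefl α := by
  unfold sRefl
  congr 2
  ext x
  constructor
  · intro h; rcases mem_span_singleton.mp h with ⟨c, rfl⟩
    exact mem_span_singleton.mpr ⟨-c, by simp⟩
  · intro h; rcases mem_span_singleton.mp h with ⟨c, rfl⟩
    exact mem_span_singleton.mpr ⟨-c, by simp⟩

lemma liso_mul_apply (f g : V ≃ₗᵢ[ℝ] V) (v : V) : (f * g) v = f (g v) := rfl

lemma sRefl_conj (f : V ≃ₗᵢ[ℝ] V) (α : V) : sRefl (f α) = f * sRefl α * f⁻¹ := by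
  ext v
  rw [liso_mul_apply, liso_mul_apply, sRefl_apply, sRefl_apply]
  have h1 : ⟪f α, f α⟫ = ⟪α, α⟫ := f.inner_map_map α α
  have h2 : ⟪α, f⁻¹ v⟫ = ⟪f α, v⟫ := by
    have := f.inner_map_map α (f⁻¹ v)
    rw [show f (f⁻¹ v) = v from f.apply_symm_apply v] at this
    exact this.symm
  rw [map_sub, map_smul, h1, h2]
  congr 1
  exact (f.apply_symm_apply v).symm

lemma inner_self_pos' {v : V} (hv : v ≠ 0) : (0:ℝ) < ⟪v, v⟫ :=
  not_le.mp (fun h => hv (real_inner_self_nonpos.mp h))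

lemma coroot_neg (α : V) : coroot (-α) = - coroot α := by
  unfold coroot; simp

lemma inner_coroot_right (u v : V) : ⟪u, coroot v⟫ = 2 * ⟪u, v⟫ / ⟪v, v⟫ := by
  unfold coroot; rw [real_inner_smul_right]; ring

lemma inner_coroot_self (v : V) (hv : v ≠ 0) : ⟪v, coroot v⟫ = 2 := by
  rw [inner_coroot_right]
  have : ⟪v, v⟫ ≠ 0 := ne_of_gt (inner_self_pos' hv)
  field_simp

lemma coroot_isometry (f : V ≃ₗᵢ[ℝ] V) (v : V) : coroot (f v) = f (coroot v) := by
  unfold coroot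
  rw [f.inner_map_map, map_smul]

/-- Cauchy–Schwarz equality case: if `⟪u,v⟫² = ⟪u,u⟫⟪v,v⟫` and `u ≠ 0` then
`v = (⟪u,v⟫/⟪u,u⟫) • u`. -/
lemma parallel_of_cs_eq {u v : V} (hu : u ≠ 0)
    (h : ⟪u, v⟫ * ⟪u, v⟫ = ⟪u, u⟫ * ⟪v, v⟫) : v = (⟪u, v⟫ / ⟪u, u⟫) • u := by
  have hupos := inner_self_pos' hu
  have hune : ⟪u, u⟫ ≠ 0 := ne_of_gt hupos
  have hw : ⟪(⟪u,u⟫ • v - ⟪u,v⟫ • u), (⟪u,u⟫ • v - ⟪u,v⟫ • u)⟫ = 0 := by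
    have expand : ⟪(⟪u,u⟫ • v - ⟪u,v⟫ • u), (⟪u,u⟫ • v - ⟪u,v⟫ • u)⟫
        = ⟪u,u⟫ * (⟪u,u⟫*⟪v,v⟫ - ⟪u,v⟫*⟪u,v⟫) := by
      rw [inner_sub_left, inner_sub_right, inner_sub_right]
      rw [real_inner_smul_left, real_inner_smul_left, real_inner_smul_left,
        real_inner_smul_left, real_inner_smul_right, real_inner_smul_right,
        real_inner_smul_right, real_inner_smul_right]
      rw [real_inner_comm v u]
      ring
    rw [expand, ← h]
    ring
  have hz : ⟪u,u⟫ • v - ⟪u,v⟫ • u = 0 := by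
    by_contra hne
    exact (ne_of_gt (inner_self_pos' hne)) hw
  have heq : ⟪u,u⟫ • v = ⟪u,v⟫ • u := sub_eq_zero.mp hz
  rw [div_eq_inv_mul, mul_smul, ← heq, inv_smul_smul₀ hune]


lemma inner_list_sum (v : V) (l : List V) :
    ⟪v, l.sum⟫ = (l.map fun u => ⟪v, u⟫).sum := by
  induction l with
  | nil => simp
  | cons a t ih => simp [inner_add_right, ih]

lemma listsum_nonpos (l : List V) (f : V → ℝ) (h : ∀ u ∈ l, f u ≤ 0) :
    (l.map f).sum ≤ 0 := by
  induction l with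
  | nil => simp
  | cons a t ih =>
    simp only [List.map_cons, List.sum_cons]
    have h1 : f a ≤ 0 := h a (by simp)
    have h2 : (t.map f).sum ≤ 0 := ih (fun u hu => h u (by simp [hu]))
    linarith

lemma exists_pos_of_sum_pos (l : List V) (f : V → ℝ) (h : 0 < (l.map f).sum) :
    ∃ u ∈ l, 0 < f u := by
  by_contra hc
  push_neg at hc
  exact absurd (listsum_nonpos l f hc) (by linarith)

lemma split_at_mem {a : V} {l : List V} (h : a ∈ l) :
    ∃ r : List V, r.length + 1 = l.length ∧ (∀ u ∈ r, u ∈ l) ∧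
      (∀ g : V → V, (l.map g).sum = g a + (r.map g).sum) ∧
      l.sum = a + r.sum := by
  obtain ⟨s, t, rfl⟩ := List.append_of_mem h
  refine ⟨s ++ t, by simp; omega, ?_, ?_, ?_⟩
  · intro u hu
    rcases List.mem_append.mp hu with h' | h'
    · exact List.mem_append.mpr (Or.inl h')
    · exact List.mem_append.mpr (Or.inr (by simp [h']))
  · intro g
    simp only [List.map_append, List.map_cons, List.sum_append, List.sum_cons]
    abel
  · simp only [List.sum_append, List.sum_cons]
    abel

lemma neg_list_sum (l : List V) : (l.map Neg.neg).sum = - l.sum := by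
  induction l with
  | nil => simp
  | cons a t ih => simp [ih]; abel

lemma join_replicate_sum (n : ℕ) (l : List V) :
    ((List.replicate n l).flatten).sum = n • l.sum := by
  induction n with
  | zero => simp
  | succ k ih => simp [List.replicate_succ, ih, succ_nsmul]; abel

lemma exists_list_of_mem_zspan {s : Set V} (hneg : ∀ u ∈ s, -u ∈ s) {v : V}
    (hv : v ∈ span ℤ s) : ∃ l : List V, (∀ u ∈ l, u ∈ s) ∧ l.sum = v := by
  induction hv using span_induction with
  | mem x hx => exact ⟨[x], by simpa using hx, by simp⟩
  | zero => exact ⟨[], by simp, by simp⟩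
  | add x y hx hy ihx ihy =>
    obtain ⟨l₁, h₁, e₁⟩ := ihx
    obtain ⟨l₂, h₂, e₂⟩ := ihy
    exact ⟨l₁ ++ l₂, by
      intro u hu
      rcases List.mem_append.mp hu with h | h
      exacts [h₁ u h, h₂ u h], by simp [e₁, e₂]⟩
  | smul k x hx ihx =>
    obtain ⟨l, hl, el⟩ := ihx
    by_cases hk : 0 ≤ k
    · refine ⟨(List.replicate k.toNat l).flatten, ?_, ?_⟩
      · intro u hu
        rw [List.mem_flatten] at hu
        obtain ⟨t, ht, hut⟩ := hu
        rw [List.mem_replicate] at ht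
        exact hl u (ht.2 ▸ hut)
      · rw [join_replicate_sum, el, ← natCast_zsmul, Int.toNat_of_nonneg hk]
    · refine ⟨(List.replicate (-k).toNat (l.map Neg.neg)).flatten, ?_, ?_⟩
      · intro u hu
        rw [List.mem_flatten] at hu
        obtain ⟨t, ht, hut⟩ := hu
        rw [List.mem_replicate] at ht
        rw [ht.2] at hut
        obtain ⟨w, hw, rfl⟩ := List.mem_map.mp hut
        exact hneg w (hl w hw)
      · rw [join_replicate_sum, neg_list_sum, el, ← natCast_zsmul,
          Int.toNat_of_nonneg (by linarith : (0:ℤ) ≤ -k)]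
        simp

lemma exists_coroot_list_of_mem_zspan {s : Set V} (hneg : ∀ u ∈ s, -u ∈ s) {v : V}
    (hv : v ∈ span ℤ (coroot '' s)) :
    ∃ l : List V, (∀ u ∈ l, u ∈ s) ∧ (l.map coroot).sum = v := by
  induction hv using span_induction with
  | mem x hx =>
    obtain ⟨ψ, hψ, rfl⟩ := hx
    exact ⟨[ψ], by simpa using hψ, by simp⟩
  | zero => exact ⟨[], by simp, by simp⟩
  | add x y hx hy ihx ihy =>
    obtain ⟨l₁, h₁, e₁⟩ := ihx
    obtain ⟨l₂, h₂, e₂⟩ := ihy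
    exact ⟨l₁ ++ l₂, by
      intro u hu
      rcases List.mem_append.mp hu with h | h
      exacts [h₁ u h, h₂ u h], by simp [e₁, e₂]⟩
  | smul k x hx ihx =>
    obtain ⟨l, hl, el⟩ := ihx
    have negmap : ((l.map Neg.neg).map coroot).sum = - (l.map coroot).sum := by
      rw [List.map_map]
      have : coroot ∘ (Neg.neg : V → V) = Neg.neg ∘ coroot := by
        funext u; simp [coroot_neg]
      rw [this, ← List.map_map, neg_list_sum]
    by_cases hk : 0 ≤ k
    · refine ⟨(List.replicate k.toNat l).flatten, ?_, ?_⟩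
      · intro u hu
        rw [List.mem_flatten] at hu
        obtain ⟨t, ht, hut⟩ := hu
        rw [List.mem_replicate] at ht
        exact hl u (ht.2 ▸ hut)
      · rw [List.map_flatten, List.map_replicate, join_replicate_sum, el,
          ← natCast_zsmul, Int.toNat_of_nonneg hk]
    · refine ⟨(List.replicate (-k).toNat (l.map Neg.neg)).flatten, ?_, ?_⟩
      · intro u hu
        rw [List.mem_flatten] at hu
        obtain ⟨t, ht, hut⟩ := hu
        rw [List.mem_replicate] at ht
        rw [ht.2] at hut
        obtain ⟨w, hw, rfl⟩ := List.mem_map.mp hut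
        exact hneg w (hl w hw)
      · rw [List.map_flatten, List.map_replicate, join_replicate_sum, negmap, el,
          ← natCast_zsmul, Int.toNat_of_nonneg (by linarith : (0:ℤ) ≤ -k)]
        simp

-- W stability
lemma weyl_maps_subsystem {Φ Φ' R : Set V} (hsub : IsRootSubsystem Φ Φ') (hRΦ' : R ⊆ Φ')
    {g : V ≃ₗᵢ[ℝ] V} (hg : g ∈ weylGroup R) : ∀ v ∈ Φ', g v ∈ Φ' := by
  have main : ∀ g ∈ weylGroup R, (∀ v ∈ Φ', g v ∈ Φ') ∧ (∀ v ∈ Φ', g⁻¹ v ∈ Φ') := by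
    intro g hg
    induction hg using Subgroup.closure_induction with
    | mem x hx =>
      obtain ⟨γ, hγ, rfl⟩ := hx
      constructor
      · intro v hv; exact hsub.2 γ (hRΦ' hγ) v hv
      · intro v hv; rw [sRefl_inv]; exact hsub.2 γ (hRΦ' hγ) v hv
    | one => constructor <;> intro v hv <;> simpa using hv
    | mul x y hx hy ihx ihy =>
      constructor
      · intro v hv
        rw [liso_mul_apply]
        exact ihx.1 _ (ihy.1 v hv)
      · intro v hv
        rw [mul_inv_rev, liso_mul_apply]
        exact ihy.2 _ (ihx.2 v hv)
    | inv x hx ihx =>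
      exact ⟨ihx.2, by simpa using ihx.1⟩
  exact (main g hg).1

lemma crys2 {Φ : Set V} (hcr : IsCrystallographic Φ) (h0 : (0:V) ∉ Φ)
    {u v : V} (hu : u ∈ Φ) (hv : v ∈ Φ) : ∃ k : ℤ, 2 * ⟪u, v⟫ = (k:ℝ) * ⟪u, u⟫ := by
  obtain ⟨k, hk⟩ := hcr u hu v hv
  have hne : ⟪u, u⟫ ≠ 0 := ne_of_gt (inner_self_pos' (fun h => h0 (h ▸ hu)))
  exact ⟨k, by field_simp at hk; linarith [hk]⟩

lemma norm_eq_of_parallel {Φ : Set V} (h0 : (0:V) ∉ Φ)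
    (hax : ∀ α ∈ Φ, ∀ r : ℝ, r • α ∈ Φ → r = 1 ∨ r = -1)
    {u w : V} (hu : u ∈ Φ) (hw : w ∈ Φ) {c : ℝ} (hpar : w = c • u) :
    ⟪w, w⟫ = ⟪u, u⟫ := by
  rcases hax u hu c (hpar ▸ hw) with h1 | h1 <;>
    rw [hpar, h1] <;>
    simp [real_inner_smul_left, real_inner_smul_right]

/-- two roots whose norms differ by a factor ≥ 4 are orthogonal -/
lemma orth_of_ratio_ge_four {Φ : Set V} (hcr : IsCrystallographic Φ) (h0 : (0:V) ∉ Φ)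
    (hax : ∀ α ∈ Φ, ∀ r : ℝ, r • α ∈ Φ → r = 1 ∨ r = -1)
    {u w : V} (hu : u ∈ Φ) (hw : w ∈ Φ) (h4 : 4 * ⟪u, u⟫ ≤ ⟪w, w⟫) :
    ⟪u, w⟫ = 0 := by
  by_contra hne
  have hu0 : u ≠ 0 := fun h => h0 (h ▸ hu)
  have hw0 : w ≠ 0 := fun h => h0 (h ▸ hw)
  have hupos := inner_self_pos' hu0
  have hwpos := inner_self_pos' hw0
  obtain ⟨s, hs⟩ := crys2 hcr h0 hu hw      -- 2⟪u,w⟫ = s⟪u,u⟫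
  obtain ⟨t, ht⟩ := crys2 hcr h0 hw hu      -- 2⟪w,u⟫ = t⟪w,w⟫
  rw [real_inner_comm u w] at ht
  have hteq : (s:ℝ) * ⟪u,u⟫ = (t:ℝ) * ⟪w,w⟫ := by linarith
  have ht0 : t ≠ 0 := by
    intro h; rw [h] at ht; push_cast at ht
    exact hne (by linarith)
  have ht1 : (1:ℝ) ≤ (t:ℝ)^2 := by
    have h1 : (1:ℤ) ≤ |t| := Int.one_le_abs ht0
    have h2 : (1:ℤ) ≤ t^2 := by nlinarith [sq_abs t]
    exact_mod_cast h2
  have hcs : ⟪u,w⟫ * ⟪u,w⟫ ≤ ⟪u,u⟫ * ⟪w,w⟫ := real_inner_mul_inner_self_le u w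
  have hst4 : (s:ℝ) * (t:ℝ) * (⟪u,u⟫ * ⟪w,w⟫) = 4 * (⟪u,w⟫ * ⟪u,w⟫) := by
    linear_combination (-(t:ℝ)*⟪w,w⟫)*hs + (-(2:ℝ)*⟪u,w⟫)*ht
  have hstle : (s:ℝ) * t ≤ 4 := by nlinarith [mul_pos hupos hwpos]
  have h5 : (s:ℝ)*t*⟪u,u⟫ = (t:ℝ)^2*⟪w,w⟫ := by linear_combination (t:ℝ)*hteq
  have hstge : 4 * (t:ℝ)^2 ≤ (s:ℝ) * t := by nlinarith [sq_nonneg (t:ℝ)]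
  have ht2 : (t:ℝ)^2 = 1 := by nlinarith
  have hst_eq : (s:ℝ) * t = 4 := by nlinarith
  have heq : ⟪u,w⟫ * ⟪u,w⟫ = ⟪u,u⟫ * ⟪w,w⟫ := by
    rw [hst_eq] at hst4; linarith
  have hpar := parallel_of_cs_eq hu0 heq
  have hww := norm_eq_of_parallel h0 hax hu hw hpar
  nlinarith

/-- The master lemma for the stuck case. -/
lemma master {Φ : Set V} (hcr : IsCrystallographic Φ) (h0 : (0:V) ∉ Φ)
    (hax : ∀ α ∈ Φ, ∀ r : ℝ, r • α ∈ Φ → r = 1 ∨ r = -1)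
    {β x y η : V} (hβ : β ∈ Φ) (hx : x ∈ Φ) (hy : y ∈ Φ) (hη : η ∈ Φ)
    (hβx : 2 * ⟪β, x⟫ = ⟪x, x⟫) (hxN : 2 * ⟪β, β⟫ ≤ ⟪x, x⟫)
    (hyy : ⟪y, y⟫ = ⟪x, x⟫) (hxy : x + y = (⟪x,x⟫ / ⟪β,β⟫) • β)
    (ha : 0 < ⟪β, η⟫) :
    2 * ⟪β, η⟫ = ⟪η, η⟫ ∨ η = β := by
  have hβ0 : β ≠ 0 := fun h => h0 (h ▸ hβ)
  have hη0 : η ≠ 0 := fun h => h0 (h ▸ hη)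
  have hN := inner_self_pos' hβ0
  have hE := inner_self_pos' hη0
  obtain ⟨p, hp⟩ := crys2 hcr h0 hη hβ     -- 2⟪η,β⟫ = p⟪η,η⟫
  obtain ⟨q, hq⟩ := crys2 hcr h0 hβ hη     -- 2⟪β,η⟫ = q⟪β,β⟫
  rw [real_inner_comm β η] at hp
  have hppos : 0 < (p:ℝ) := by nlinarith
  have hqpos : 0 < (q:ℝ) := by nlinarith
  have hpz : 1 ≤ p := by have : 0 < p := by exact_mod_cast hppos
                         omega
  have hqz : 1 ≤ q := by have : 0 < q := by exact_mod_cast hqpos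
                         omega
  have hcs : ⟪β,η⟫ * ⟪β,η⟫ ≤ ⟪β,β⟫ * ⟪η,η⟫ := real_inner_mul_inner_self_le β η
  have hpq4 : (p:ℝ) * q * (⟪β,β⟫ * ⟪η,η⟫) = 4 * (⟪β,η⟫ * ⟪β,η⟫) := by
    linear_combination (-(p:ℝ)*⟪η,η⟫)*hq + (-(2:ℝ)*⟪β,η⟫)*hp
  have hpqle : (p:ℝ) * q ≤ 4 := by nlinarith [mul_pos hN hE]
  have hpqle' : p * q ≤ 4 := by exact_mod_cast hpqle
  by_cases hc : p * q = 4
  · have hc' : (p:ℝ) * q = 4 := by exact_mod_cast hc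
    have heq : ⟪β,η⟫ * ⟪β,η⟫ = ⟪β,β⟫ * ⟪η,η⟫ := by
      rw [hc'] at hpq4; linarith
    have hpar := parallel_of_cs_eq hβ0 heq
    rcases hax β hβ _ (hpar ▸ hη) with h1 | h1
    · right; rw [hpar, h1, one_smul]
    · exfalso
      rw [hpar, h1] at ha
      rw [real_inner_smul_right] at ha
      nlinarith
  · have hpq3 : p * q ≤ 3 := by
      rcases lt_or_eq_of_le hpqle' with h | h
      · omega
      · exact absurd h hc
    by_cases hηN : ⟪β,β⟫ ≤ ⟪η,η⟫
    · left
      have hpleq : p ≤ q := by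
        have h1 : (p:ℝ) * ⟪β,β⟫ ≤ (q:ℝ) * ⟪β,β⟫ := by nlinarith
        have h2 := le_of_mul_le_mul_right h1 hN
        exact_mod_cast h2
      have hp1 : p = 1 := by nlinarith
      rw [hp1] at hp; push_cast at hp; linarith
    · exfalso
      push_neg at hηN
      have hqltp : q < p := by
        have h1 : (q:ℝ) * ⟪β,β⟫ < (p:ℝ) * ⟪β,β⟫ := by nlinarith
        have h2 := lt_of_mul_lt_mul_right h1 hN.le
        exact_mod_cast h2
      have hq1 : q = 1 := by nlinarith
      have hp2 : 2 ≤ p := by omega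
      have hsmall : 4 * ⟪η,η⟫ ≤ 2 * ⟪β,β⟫ := by
        have h3 : (2:ℝ) ≤ (p:ℝ) := by exact_mod_cast hp2
        rw [hq1] at hq; push_cast at hq
        nlinarith
      have hox : ⟪η, x⟫ = 0 :=
        orth_of_ratio_ge_four hcr h0 hax hη hx (by linarith)
      have hoy : ⟪η, y⟫ = 0 :=
        orth_of_ratio_ge_four hcr h0 hax hη hy (by rw [hyy]; linarith)
      have hsum : ⟪η, x + y⟫ = (⟪x,x⟫/⟪β,β⟫) * ⟪η, β⟫ := by
        rw [hxy, real_inner_smul_right]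
      rw [inner_add_right, hox, hoy, real_inner_comm β η] at hsum
      have hxx : 0 < ⟪x,x⟫ := inner_self_pos' (fun h => h0 (h ▸ hx))
      have hpos : 0 < (⟪x,x⟫/⟪β,β⟫) * ⟪β, η⟫ := by positivity
      linarith


lemma liso_list_sum (f : V ≃ₗᵢ[ℝ] V) (l : List V) : (l.map f).sum = f l.sum := by
  induction l with
  | nil => simp
  | cons a t ih => simp [ih, map_add]

/-- the set of roots of `Φ'` whose reflection already lies in `W_R` -/
def good (R Φ' : Set V) : Set V := {v | v ∈ Φ' ∧ sRefl v ∈ weylGroup R}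

theorem key (Φ R Φ' : Set V) (hΦ : IsRootSystem Φ) (hcr : IsCrystallographic Φ)
    (hRΦ : R ⊆ Φ) (hsub : IsRootSubsystem Φ Φ') (hRΦ' : R ⊆ Φ')
    (hL : span ℤ Φ' = span ℤ R) (hLvee : span ℤ (coroot '' Φ') = span ℤ (coroot '' R)) :
    ∀ n m : ℕ, ∀ β ∈ Φ',
      (∃ l : List V, (∀ u ∈ l, u ∈ good R Φ') ∧ (l.map coroot).sum = coroot β ∧ l.length = n) →
      (∃ l : List V, (∀ u ∈ l, u ∈ good R Φ') ∧ l.sum = β ∧ l.length = m) →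
      sRefl β ∈ weylGroup R := by
  obtain ⟨hfin, h0, hspanΦ, hclos, hax⟩ := hΦ
  have hΦ'Φ : Φ' ⊆ Φ := hsub.1
  have hclos' : ∀ α ∈ Φ', ∀ v ∈ Φ', sRefl α v ∈ Φ' := hsub.2
  have hng : ∀ v ∈ Φ', -v ∈ Φ' := fun v hv => by
    rw [← sRefl_self v]; exact hclos' v hv v hv
  have hgsub : good R Φ' ⊆ Φ' := fun v hv => hv.1
  have hgrefl : ∀ v ∈ good R Φ', sRefl v ∈ weylGroup R := fun v hv => hv.2
  have hRg : R ⊆ good R Φ' := fun γ hγ =>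
    ⟨hRΦ' hγ, Subgroup.subset_closure ⟨γ, hγ, rfl⟩⟩
  have hgneg : ∀ v ∈ good R Φ', -v ∈ good R Φ' := fun v hv =>
    ⟨hng v hv.1, by rw [sRefl_neg]; exact hv.2⟩
  have hgstab : ∀ g ∈ weylGroup R, ∀ v ∈ good R Φ', g v ∈ good R Φ' := by
    intro g hg v hv
    refine ⟨weyl_maps_subsystem hsub hRΦ' hg v hv.1, ?_⟩
    rw [sRefl_conj g v]
    exact mul_mem (mul_mem hg hv.2) (inv_mem hg)
  have hPrim : ∀ v ∈ Φ', ∃ l : List V, (∀ u ∈ l, u ∈ good R Φ') ∧ l.sum = v := by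
    intro v hv
    refine exists_list_of_mem_zspan hgneg ?_
    have h1 : v ∈ span ℤ Φ' := subset_span hv
    rw [hL] at h1
    exact span_mono hRg h1
  -- main double induction
  intro n
  induction n using Nat.strong_induction_on with
  | _ n ihn =>
  intro m
  induction m using Nat.strong_induction_on with
  | _ m ihm =>
  intro β hβ hdual hprim
  obtain ⟨ld, hldg, hldsum, hldlen⟩ := hdual
  obtain ⟨lp, hlpg, hlpsum, hlplen⟩ := hprim
  have hβΦ : β ∈ Φ := hΦ'Φ hβ
  have hβ0 : β ≠ 0 := fun h => h0 (h ▸ hβΦ)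
  have hN : (0:ℝ) < ⟪β, β⟫ := inner_self_pos' hβ0
  -- the pairing sums
  have htwo : ((ld.map fun u => ⟪β, coroot u⟫).sum) = 2 := by
    have e1 : ⟪β, (ld.map coroot).sum⟫ = ((ld.map coroot).map fun u => ⟪β, u⟫).sum :=
      inner_list_sum β (ld.map coroot)
    rw [hldsum, inner_coroot_self β hβ0] at e1
    rw [List.map_map] at e1
    exact e1.symm
  by_cases hred : ∃ e ∈ ld, 0 < ⟪β, coroot e⟫ ∧ ⟪e, coroot β⟫ = 1
  · -- CASE A : reduction of the dual length
    obtain ⟨η, hηl, hpos, hq1⟩ := hred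
    have hηg := hldg η hηl
    have hηΦ' : η ∈ Φ' := hηg.1
    have hηΦ : η ∈ Φ := hΦ'Φ hηΦ'
    have hη0 : η ≠ 0 := fun h => h0 (h ▸ hηΦ)
    set β₁ := sRefl η β with hβ₁def
    have hβ₁Φ' : β₁ ∈ Φ' := hclos' η hηΦ' β hβ
    have hcor : coroot β₁ = coroot β - coroot η := by
      rw [hβ₁def, coroot_isometry (sRefl η) β, sRefl_apply]
      have : (2 * ⟪η, coroot β⟫ / ⟪η, η⟫) • η = coroot η := by
        rw [hq1, mul_one]
        rfl
      rw [this]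
    obtain ⟨r, hrlen, hrmem, hgsum, _⟩ := split_at_mem hηl
    have hrsum : (r.map coroot).sum = coroot β₁ := by
      have h1 := hgsum coroot
      rw [hldsum] at h1
      rw [hcor]
      rw [h1]; abel
    obtain ⟨lp₁, hlp₁g, hlp₁sum⟩ := hPrim β₁ hβ₁Φ'
    have hrec : sRefl β₁ ∈ weylGroup R := by
      refine ihn r.length (by omega) lp₁.length β₁ hβ₁Φ'
        ⟨r, fun u hu => hldg u (hrmem u hu), hrsum, rfl⟩
        ⟨lp₁, hlp₁g, hlp₁sum, rfl⟩
    have hβeq : β = sRefl η β₁ := (sRefl_involutive η β).symm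
    rw [show sRefl β = sRefl (sRefl η β₁) from by rw [← hβeq], sRefl_conj (sRefl η) β₁]
    exact mul_mem (mul_mem (hgrefl η hηg) hrec) (by rw [sRefl_inv]; exact hgrefl η hηg)
  · -- CASE B : stuck; use the master lemma and reduce the primal length
    push_neg at hred
    obtain ⟨x, hxl, hxpos⟩ := exists_pos_of_sum_pos ld (fun u => ⟪β, coroot u⟫)
      (by rw [htwo]; norm_num)
    have hxg := hldg x hxl
    have hxΦ' : x ∈ Φ' := hxg.1
    have hxΦ : x ∈ Φ := hΦ'Φ hxΦ'
    have hx0 : x ≠ 0 := fun h => h0 (h ▸ hxΦ)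
    have hX : (0:ℝ) < ⟪x, x⟫ := inner_self_pos' hx0
    have hβx : (0:ℝ) < ⟪β, x⟫ := by
      rw [inner_coroot_right] at hxpos
      rcases div_pos_iff.mp hxpos with ⟨h1, _⟩ | ⟨_, h2⟩
      · linarith
      · linarith
    obtain ⟨q, hq⟩ := crys2 hcr h0 hβΦ hxΦ    -- 2⟪β,x⟫ = q⟪β,β⟫
    obtain ⟨p, hp⟩ := crys2 hcr h0 hxΦ hβΦ    -- 2⟪x,β⟫ = p⟪x,x⟫
    rw [real_inner_comm β x] at hp
    have hqReal : ⟪x, coroot β⟫ = (q:ℝ) := by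
      rw [inner_coroot_right, real_inner_comm β x]
      rw [hq]
      field_simp
    have hqne1 : ⟪x, coroot β⟫ ≠ 1 := hred x hxl hxpos
    have hq1 : q ≠ 1 := by
      intro h; rw [h] at hqReal; exact hqne1 (by rw [hqReal]; norm_num)
    have hqpos : (0:ℝ) < (q:ℝ) := by nlinarith
    have hq2 : 2 ≤ q := by
      have : 0 < q := by exact_mod_cast hqpos
      omega
    have hppos : (0:ℝ) < (p:ℝ) := by nlinarith
    have hp1' : 1 ≤ p := by
      have : 0 < p := by exact_mod_cast hppos
      omega
    have hcs : ⟪β,x⟫ * ⟪β,x⟫ ≤ ⟪β,β⟫ * ⟪x,x⟫ := real_inner_mul_inner_self_le β x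
    have hpq4 : (p:ℝ) * q * (⟪β,β⟫ * ⟪x,x⟫) = 4 * (⟪β,x⟫ * ⟪β,x⟫) := by
      linear_combination (-(p:ℝ)*⟪x,x⟫)*hq + (-(2:ℝ)*⟪β,x⟫)*hp
    have hpqle : (p:ℝ) * q ≤ 4 := by nlinarith [mul_pos hN hX]
    have hpqle' : p * q ≤ 4 := by exact_mod_cast hpqle
    by_cases hc4 : p * q = 4
    · -- x parallel to β, so x = β and we are done
      have hc4' : (p:ℝ) * q = 4 := by exact_mod_cast hc4
      have heq : ⟪β,x⟫ * ⟪β,x⟫ = ⟪β,β⟫ * ⟪x,x⟫ := by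
        rw [hc4'] at hpq4; linarith
      have hpar := parallel_of_cs_eq hβ0 heq
      rcases hax β hβΦ _ (hpar ▸ hxΦ) with h1 | h1
      · rw [hpar, h1, one_smul] at hxg
        exact hxg.2
      · exfalso
        rw [hpar, h1] at hβx
        rw [real_inner_smul_right] at hβx
        nlinarith
    · have hpv : p = 1 := by
        rcases lt_or_eq_of_le hpqle' with h | h
        · nlinarith
        · exact absurd h hc4
      have hβx2 : 2 * ⟪β, x⟫ = ⟪x, x⟫ := by
        rw [hpv] at hp; push_cast at hp; linarith
      have hxN : 2 * ⟪β, β⟫ ≤ ⟪x, x⟫ := by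
        have : (2:ℝ) ≤ (q:ℝ) := by exact_mod_cast hq2
        nlinarith
      -- the companion root y
      set y := (⟪x,x⟫ / ⟪β,β⟫) • β - x with hydef
      have hyrefl : sRefl β x = -y := by
        rw [sRefl_apply, hydef, hβx2]
        abel
      have hyΦ' : y ∈ Φ' := by
        have h1 : sRefl β x ∈ Φ' := hclos' β hβ x hxΦ'
        have h2 := hng _ h1
        rw [hyrefl] at h2; simpa using h2
      have hyΦ : y ∈ Φ := hΦ'Φ hyΦ'
      have hyy : ⟪y, y⟫ = ⟪x, x⟫ := by
        have h1 : ⟪sRefl β x, sRefl β x⟫ = ⟪x, x⟫ := (sRefl β).inner_map_map x x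
        rw [hyrefl] at h1
        simpa using h1
      have hxy : x + y = (⟪x,x⟫ / ⟪β,β⟫) • β := by rw [hydef]; abel
      -- primal step
      have hNsum : ((lp.map fun u => ⟪β, u⟫).sum) = ⟪β,β⟫ := by
        have e1 := inner_list_sum β lp
        rw [hlpsum] at e1
        exact e1.symm
      obtain ⟨η', hη'l, hη'pos⟩ := exists_pos_of_sum_pos lp (fun u => ⟪β, u⟫)
        (by rw [hNsum]; exact hN)
      have hη'g := hlpg η' hη'l
      have hη'Φ' : η' ∈ Φ' := hη'g.1
      have hη'Φ : η' ∈ Φ := hΦ'Φ hη'Φ'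
      have hη'0 : η' ≠ 0 := fun h => h0 (h ▸ hη'Φ)
      rcases master hcr h0 hax hβΦ hxΦ hyΦ hη'Φ hβx2 hxN hyy hxy hη'pos with hm | hm
      · -- ζ = β - η' : primal length decreases
        have hE' : (0:ℝ) < ⟪η', η'⟫ := inner_self_pos' hη'0
        have hζdef : sRefl η' β = β - η' := by
          rw [sRefl_apply]
          have h1 : ⟪η', β⟫ = ⟪β, η'⟫ := real_inner_comm β η'
          have h2 : 2 * ⟪η', β⟫ = ⟪η', η'⟫ := by rw [h1]; linarith
          rw [h2, div_self (ne_of_gt hE'), one_smul]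
        have hζΦ' : β - η' ∈ Φ' := by
          rw [← hζdef]; exact hclos' η' hη'Φ' β hβ
        obtain ⟨r', hr'len, hr'mem, _, hpsum⟩ := split_at_mem hη'l
        have hr'sum : r'.sum = β - η' := by
          rw [hlpsum] at hpsum
          rw [hpsum]; abel
        -- transported dual list
        have hdual₁ : ((ld.map (sRefl η')).map coroot).sum = coroot (β - η') := by
          rw [List.map_map]
          have hfun : (coroot ∘ (sRefl η' : V → V)) = ((sRefl η' : V → V) ∘ coroot) := by
            funext u; exact coroot_isometry (sRefl η') u
          rw [hfun, ← List.map_map, liso_list_sum, hldsum, ← coroot_isometry, hζdef]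
        have hrec : sRefl (β - η') ∈ weylGroup R := by
          refine ihm r'.length (by omega) (β - η') hζΦ'
            ⟨ld.map (sRefl η'), ?_, hdual₁, by simpa using hldlen⟩
            ⟨r', fun u hu => hlpg u (hr'mem u hu), hr'sum, rfl⟩
          intro u hu
          obtain ⟨w, hw, rfl⟩ := List.mem_map.mp hu
          exact hgstab _ (hgrefl η' hη'g) w (hldg w hw)
        have hβeq : β = sRefl η' (β - η') := by
          rw [← hζdef]; exact (sRefl_involutive η' β).symm
        rw [show sRefl β = sRefl (sRefl η' (β - η')) from by rw [← hβeq],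
          sRefl_conj (sRefl η') (β - η')]
        exact mul_mem (mul_mem (hgrefl η' hη'g) hrec)
          (by rw [sRefl_inv]; exact hgrefl η' hη'g)
      · -- η' = β
        rw [hm] at hη'g
        exact hη'g.2

end Stmt2Aux

theorem stmt_2 (Φ R Φ' : Set V) (hΦ : IsRootSystem Φ) (hcr : IsCrystallographic Φ)
    (hRΦ : R ⊆ Φ) (hRne : R.Nonempty)
    (hsub : IsRootSubsystem Φ Φ') (hRΦ' : R ⊆ Φ')
    (hL : span ℤ Φ' = span ℤ R) (hLvee : span ℤ (coroot '' Φ') = span ℤ (coroot '' R)) :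
    weylGroup Φ' = weylGroup R := by
  refine le_antisymm ?_ (Subgroup.closure_mono (Set.image_mono hRΦ'))
  refine (Subgroup.closure_le _).mpr ?_
  rintro g ⟨β, hβ, rfl⟩
  -- preliminary facts about the good set
  have h0 : (0:V) ∉ Φ := hΦ.2.1
  have hΦ'Φ : Φ' ⊆ Φ := hsub.1
  have hclos' : ∀ α ∈ Φ', ∀ v ∈ Φ', sRefl α v ∈ Φ' := hsub.2
  have hng : ∀ v ∈ Φ', -v ∈ Φ' := fun v hv => by
    rw [← sRefl_self v]; exact hclos' v hv v hv
  have hRg : R ⊆ good R Φ' := fun γ hγ =>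
    ⟨hRΦ' hγ, Subgroup.subset_closure ⟨γ, hγ, rfl⟩⟩
  have hgneg : ∀ v ∈ good R Φ', -v ∈ good R Φ' := fun v hv =>
    ⟨hng v hv.1, by rw [sRefl_neg]; exact hv.2⟩
  -- primal expansion
  have hprim : ∃ l : List V, (∀ u ∈ l, u ∈ good R Φ') ∧ l.sum = β := by
    refine exists_list_of_mem_zspan hgneg ?_
    have h1 : β ∈ span ℤ Φ' := subset_span hβ
    rw [hL] at h1
    exact span_mono hRg h1
  -- dual expansion
  have hdual : ∃ l : List V, (∀ u ∈ l, u ∈ good R Φ') ∧ (l.map coroot).sum = coroot β := by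
    refine exists_coroot_list_of_mem_zspan hgneg ?_
    have h1 : coroot β ∈ span ℤ (coroot '' Φ') := subset_span ⟨β, hβ, rfl⟩
    rw [hLvee] at h1
    exact span_mono (Set.image_mono hRg) h1
  obtain ⟨ld, hld1, hld2⟩ := hdual
  obtain ⟨lp, hlp1, hlp2⟩ := hprim
  exact key Φ R Φ' hΦ hcr hRΦ hsub hRΦ' hL hLvee ld.length lp.length β hβ
    ⟨ld, hld1, hld2, rfl⟩ ⟨lp, hlp1, hlp2, rfl⟩
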